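/- arXiv:1308.1695 — 4 statements merged into one kernel-verified Lean document; each statement's English description precedes it below -/
import Mathlib

section
/- In the two-parameter resonant transseries model described in the context, suppose the family (F^{(n)}_g) satisfies the equations, ε : ℕ² → {1, −1} is a homomorphism of additive-to-multiplicative monoids with ε(1,1) = 1, and the holomorphic ambiguities respect the symmetry: ev₀(F^{(n₁,n₂)}_g) = ε(n)·(−1)^{g+1}·ev₀(F^{(n₂,n₁)}_g) for every sector n and every g ≥ 0. Then every diagonal sector (r,r) with r ≥ 1 — a sector whose total instanton action (r − r)·A vanishes — satisfies F^{(r,r)}_g = 0 for every even g; equivalently, the sector series F^{(r,r)}(g_s) = Σ_{g≥0} g_s^{g+1} F^{(r,r)}_g contains only even powers of g_s, i.e. it has a closed-string genus expansion in g_s². -/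
set_option linter.unusedSectionVars false
set_option linter.unusedVariables false
set_option maxHeartbeats 1000000


open Polynomial

noncomputable section

/-- The ring `M = R[S,T]`: polynomials in the propagator `S` (inner variable) and the
instanton exponential `T` (outer variable). -/
abbrev TS (R : Type*) [CommRing R] : Type _ := Polynomial (Polynomial R)

/-- The propagator `S = S^{zz}` inside `R[S,T]`. -/
def Sv {R : Type*} [CommRing R] : TS R := Polynomial.C Polynomial.X

/-- The instanton exponential `T = exp((1/2)(δA)²S)` inside `R[S,T]`. -/
def Tv {R : Type*} [CommRing R] : TS R := Polynomial.X

/-- The embedding `R → R[S,T]`. -/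
def cc {R : Type*} [CommRing R] (r : R) : TS R := Polynomial.C (Polynomial.C r)

/-- `n̄ = n₁ − n₂`, so that the total instanton action of the sector `n = (n₁,n₂)`
is `n̄·A` (the actions being `A₁ = A`, `A₂ = −A`). -/
def nbar (n : ℕ × ℕ) : ℤ := (n.1 : ℤ) - (n.2 : ℤ)

/-- The operators `𝒟^{(n)}_h` of the nonperturbative holomorphic anomaly equations in the
two-parameter resonant model, for the sector with `n̄ = nb`. -/
def Dop2 {R : Type*} [CommRing R] [Algebra ℚ R] (δ : Derivation ℚ R R)
    (c ft al A : R) (p : ℕ → Polynomial R) (Dh : Derivation ℚ (TS R) (TS R))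
    (nb : ℤ) (h : ℕ) (x : TS R) : TS R :=
  if h = 1 then
    (2 : ℚ)⁻¹ • ((nb : TS R) * (cc (δ (δ A)) - (cc ft - cc c * Sv) * cc (δ A)) * x)
      + (nb : TS R) * cc (δ A) * (Dh x + ((2 : ℚ)⁻¹ • (cc c * Sv) + cc al) * x)
  else if h = 2 then
    -((2 : ℚ)⁻¹ • (Dh (Dh x) - (cc ft - cc c * Sv) * Dh x))
      - ((2 : ℚ)⁻¹ • (cc c * Sv) + cc al) * Dh x
  else if h % 2 = 1 then
    (nb : TS R) * cc (δ A) * Polynomial.C (p ((h + 1) / 2)) * x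
  else
    -(Polynomial.C (p (h / 2)) * Dh x)

/-- `sgn j = (-1)^(j+1)`. -/
def sgn (j : ℤ) : ℤ := if Even j then -1 else 1

lemma sgn_succ (j : ℤ) : sgn (j + 1) = -sgn j := by
  simp only [sgn, Int.even_add_one]
  by_cases h : Even j <;> simp [h]

lemma sgn_mod (j : ℤ) : sgn j = if j % 2 = 0 then -1 else 1 := by
  simp [sgn, Int.even_iff]

lemma sgn_natCast (g : ℕ) : ((-1 : ℤ)) ^ (g + 1) = sgn (g : ℤ) := by
  rcases Nat.even_or_odd g with h | h
  · rw [sgn, if_pos (by exact_mod_cast h), pow_succ, Even.neg_one_pow h, one_mul]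
  · rw [sgn, if_neg (by simpa [Int.even_coe_nat] using Nat.not_even_iff_odd.mpr h),
      pow_succ, Odd.neg_one_pow h]; ring

lemma sgn_even {g : ℤ} (h : Even g) : sgn g = -1 := if_pos h

lemma nbar_swap (m : ℕ × ℕ) : nbar (m.2, m.1) = -nbar m := by simp [nbar]

section Dop
variable {R : Type*} [CommRing R] [Algebra ℚ R]
  (δ : Derivation ℚ R R) (c ft al A : R) (p : ℕ → Polynomial R)
  (Dh : Derivation ℚ (TS R) (TS R))

lemma qsmul_TS (q : ℚ) (z : TS R) : q • z = algebraMap ℚ (TS R) q * z := Algebra.smul_def q z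

lemma D_zsmul (D : Derivation ℚ (TS R) (TS R)) (z : ℤ) (x : TS R) :
    D (z • x) = z • D x := by
  rw [← Int.cast_smul_eq_zsmul ℚ, D.map_smul, Int.cast_smul_eq_zsmul]

lemma D_intCast_mul (D : Derivation ℚ (TS R) (TS R)) (z : ℤ) (x : TS R) :
    D ((z : TS R) * x) = (z : TS R) * D x := by
  rw [← zsmul_eq_mul, D_zsmul, zsmul_eq_mul]

lemma Dop2_zsmul (nb : ℤ) (h : ℕ) (z : ℤ) (x : TS R) :
    Dop2 δ c ft al A p Dh nb h (z • x) = z • Dop2 δ c ft al A p Dh nb h x := by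
  unfold Dop2
  split_ifs with h1 h2 h3 <;>
    · try simp only [D_zsmul]
      simp only [zsmul_eq_mul, qsmul_TS]
      push_cast
      ring

lemma Dop2_neg (nb : ℤ) (h : ℕ) (x : TS R) :
    Dop2 δ c ft al A p Dh (-nb) h x
      = (if h % 2 = 1 then (-1 : ℤ) else 1) • Dop2 δ c ft al A p Dh nb h x := by
  unfold Dop2
  split_ifs with ha hb hc <;>
    first
      | (exfalso; omega)
      | (simp only [zsmul_eq_mul, qsmul_TS]
         push_cast
         ring)
end Dop

section DpSec
variable {R : Type*} [CommRing R] [IsDomain R] [Algebra ℚ R]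
variable (u : R) (Dp : Derivation ℚ (TS R) (TS R))
  (hDpC : ∀ r : R, Dp (cc r) = 0)
  (hDpS : Dp (Sv (R := R)) = 1)
  (hDpT : Dp (Tv (R := R)) = (2 : ℚ)⁻¹ • (cc u ^ 2 * Tv))

include hDpC hDpS in
lemma Dp_C (q : Polynomial R) : Dp (Polynomial.C q : TS R) = Polynomial.C (derivative q) := by
  induction q using Polynomial.induction_on' with
  | add p q hp hq => rw [C_add, map_add, hp, hq, derivative_add, C_add]
  | monomial i a =>
    have h1 : (Polynomial.C (Polynomial.monomial i a) : TS R) = cc a * Sv ^ i := by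
      rw [← Polynomial.C_mul_X_pow_eq_monomial, C_mul, map_pow]; rfl
    rw [h1, Derivation.leibniz, hDpC, Derivation.leibniz_pow, hDpS]
    rw [Polynomial.derivative_monomial, ← Polynomial.C_mul_X_pow_eq_monomial, C_mul, map_pow]
    simp only [smul_eq_mul, mul_one, mul_zero, add_zero, nsmul_eq_mul, C_mul, map_natCast]
    simp only [cc, Sv]
    ring

include hDpC hDpS hDpT in
lemma Dp_coeff (x : TS R) (k : ℕ) :
    (Dp x).coeff k = derivative (x.coeff k)
      + ((k : ℚ) * (2:ℚ)⁻¹) • (Polynomial.C (u ^ 2) * x.coeff k) := by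
  induction x using Polynomial.induction_on' with
  | add p q hp hq =>
    simp only [map_add, coeff_add, hp, hq, derivative_add, mul_add, smul_add]
    abel
  | monomial n q =>
    cases n with
    | zero =>
      rw [show ((monomial 0) q : TS R) = Polynomial.C q from monomial_zero_left (a := q),
        Dp_C Dp hDpC hDpS]
      rcases eq_or_ne k 0 with rfl | hk
      · simp [coeff_C]
      · simp [coeff_C, hk]
    | succ m =>
      have hT : Dp ((X : TS R) ^ (m+1))
          = (((m+1 : ℕ) : ℚ) * (2:ℚ)⁻¹) • (Polynomial.C (Polynomial.C (u^2)) * X ^ (m+1)) := by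
        have h2 := Dp.leibniz_pow (Tv (R:=R)) (m+1)
        rw [hDpT] at h2
        rw [show ((X : TS R) ^ (m+1)) = Tv ^ (m+1) from rfl, h2]
        rw [smul_comm ((Tv (R:=R)) ^ (m+1-1)) ((2:ℚ)⁻¹), ← Nat.cast_smul_eq_nsmul ℚ, smul_smul]
        congr 1
        rw [smul_eq_mul]
        simp only [cc, Tv, Nat.add_sub_cancel, ← map_pow]
        ring
      rw [← C_mul_X_pow_eq_monomial, Derivation.leibniz, hT, Dp_C Dp hDpC hDpS]
      simp only [smul_eq_mul, mul_smul_comm, coeff_add, coeff_smul, coeff_C_mul, coeff_X_pow]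
      rw [mul_comm ((X:TS R)^(m+1)) (Polynomial.C (derivative q))]
      simp only [coeff_C_mul, coeff_X_pow]
      rcases eq_or_ne k (m+1) with rfl | hk
      · simp only [if_pos rfl]
        push_cast
        rw [mul_one, mul_one, mul_one, mul_comm q (C (u^2))]
        abel
      · simp [hk]
end DpSec

section Van
variable {R : Type*} [CommRing R] [IsDomain R] [Algebra ℚ R]
variable (u : R) (Dp : Derivation ℚ (TS R) (TS R))

lemma inner1' {b : R} (hb : b ≠ 0) {p : Polynomial R} (h : derivative p = C b * p) : p = 0 := by
  by_contra hp
  rcases eq_or_ne p.natDegree 0 with h0 | h0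
  · have hc := Polynomial.eq_C_of_natDegree_eq_zero h0
    rw [hc, derivative_C, ← C_mul] at h
    have hz : b * p.coeff 0 = 0 := C_eq_zero.mp h.symm
    rcases mul_eq_zero.mp hz with h' | h'
    · exact hb h'
    · exact hp (by rw [hc, h', C_0])
  · have hlt := Polynomial.natDegree_derivative_lt h0
    rw [h, natDegree_mul (C_ne_zero.mpr hb) hp, natDegree_C] at hlt
    omega

lemma inner2' {p : Polynomial R} (h : derivative p = 0) (h0 : p.eval 0 = 0) : p = 0 := by
  have : CharZero R := charZero_of_injective_algebraMap (algebraMap ℚ R).injective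
  have hd := Polynomial.natDegree_eq_zero_of_derivative_eq_zero h
  have hc := Polynomial.eq_C_of_natDegree_eq_zero hd
  rw [← coeff_zero_eq_eval_zero] at h0
  rw [hc, h0, C_0]

lemma qsmul_poly (q : ℚ) (z : Polynomial R) : q • z = C (algebraMap ℚ R q) * z := by
  rw [Algebra.smul_def, Polynomial.algebraMap_apply]

lemma vanish (hu : u ≠ 0)
    (hDpC : ∀ r : R, Dp (cc r) = 0)
    (hDpS : Dp (Sv (R := R)) = 1)
    (hDpT : Dp (Tv (R := R)) = (2 : ℚ)⁻¹ • (cc u ^ 2 * Tv))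
    (nb : ℤ) (x : TS R)
    (hx : Dp x - (2 : ℚ)⁻¹ • (((nb : TS R)) ^ 2 * cc u ^ 2 * x) = 0)
    (h0 : x.map (Polynomial.evalRingHom (0 : R)) = 0) : x = 0 := by
  ext k m
  rw [coeff_zero]
  suffices h : x.coeff k = 0 by rw [h, coeff_zero]
  set p := x.coeff k with hp
  have hco : derivative p + ((k : ℚ) * (2:ℚ)⁻¹) • (Polynomial.C (u ^ 2) * p)
      = (2:ℚ)⁻¹ • (((nb : Polynomial R)) ^ 2 * Polynomial.C (u ^ 2) * p) := by
    have h1 := congrArg (fun y => Polynomial.coeff y k) hx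
    simp only [coeff_sub, coeff_zero, coeff_smul] at h1
    rw [Dp_coeff u Dp hDpC hDpS hDpT, sub_eq_zero] at h1
    rw [h1]
    congr 1
    have hcast : ((nb : TS R)) ^ 2 * cc u ^ 2
        = Polynomial.C (((nb : Polynomial R)) ^ 2 * Polynomial.C (u ^ 2)) := by
      rw [← map_intCast (Polynomial.C : Polynomial R →+* TS R) nb, ← map_pow, map_mul]
      simp [cc, ← map_pow]
    rw [hcast, coeff_C_mul, mul_assoc]
  set b : R := algebraMap ℚ R (2:ℚ)⁻¹ * ((nb : R)^2 * u^2)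
      - algebraMap ℚ R ((k:ℚ) * (2:ℚ)⁻¹) * u^2 with hb
  have key : derivative p = Polynomial.C b * p := by
    rw [qsmul_poly, qsmul_poly] at hco
    rw [← map_intCast (Polynomial.C : R →+* Polynomial R) nb] at hco
    rw [hb, map_sub, map_mul, map_mul, map_mul, map_pow,
      map_intCast (Polynomial.C : R →+* Polynomial R) nb]
    rw [← map_intCast (Polynomial.C : R →+* Polynomial R) nb]
    linear_combination hco
  by_cases hbz : b = 0
  · rw [hbz, C_0, zero_mul] at key
    have hev : p.eval 0 = 0 := by
      have := congrArg (fun y => Polynomial.coeff y k) h0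
      simpa [coeff_map] using this
    exact inner2' key hev
  · exact inner1' hbz key
end Van

/-- In the two-parameter resonant model, if the holomorphic ambiguities respect the
`ℤ₂`-symmetry (with `ε(1,1) = 1`), then every diagonal sector `(r,r)` — whose total
instanton action vanishes — satisfies `F^{(r,r)}_g = 0` for all even `g`, i.e. the sector
series `Σ_g g_s^{g+1} F^{(r,r)}_g` has a closed-string genus expansion in `g_s²`. -/
theorem diagonal_sector_genus_expansion
    {R : Type*} [CommRing R] [IsDomain R] [Algebra ℚ R]
    (δ : Derivation ℚ R R) (c f ft al A : R) (hA : δ A ≠ 0)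
    (p : ℕ → Polynomial R) (hp : ∀ h : ℕ, 2 ≤ h → (p h).natDegree ≤ 3 * h - 2)
    (Dp Dh : Derivation ℚ (TS R) (TS R))
    (hDpC : ∀ r : R, Dp (cc r) = 0)
    (hDpS : Dp (Sv (R := R)) = 1)
    (hDpT : Dp (Tv (R := R)) = (2 : ℚ)⁻¹ • (cc (δ A) ^ 2 * Tv))
    (hDhC : ∀ r : R, Dh (cc r) = cc (δ r))
    (hDhS : Dh (Sv (R := R)) = cc f - cc c * Sv ^ 2)
    (hDhT : Dh (Tv (R := R)) = (cc (δ A) * cc (δ (δ A)) * Sv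
        + (2 : ℚ)⁻¹ • (cc (δ A) ^ 2 * (cc f - cc c * Sv ^ 2))) * Tv)
    (F : ℕ × ℕ → ℤ → TS R)
    (hFneg : ∀ (n : ℕ × ℕ) (j : ℤ), j < 0 → F n j = 0)
    (heq : ∀ n : ℕ × ℕ, n ≠ 0 → ∀ g : ℕ,
      Dp (F n (g : ℤ)) - (2 : ℚ)⁻¹ • (((nbar n : TS R)) ^ 2 * cc (δ A) ^ 2 * F n (g : ℤ))
        = -(∑ h ∈ Finset.Icc 1 g, Dop2 δ c ft al A p Dh (nbar n) h (F n ((g : ℤ) - (h : ℤ))))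
          + (2 : ℚ)⁻¹ •
            ∑ m ∈ (Finset.range (n.1 + 1) ×ˢ Finset.range (n.2 + 1)).filter
                (fun m => m ≠ 0 ∧ m ≠ n),
              ∑ h ∈ Finset.range g,
                (Dh (F m ((h : ℤ) - 1)) - (nbar m : TS R) * cc (δ A) * F m (h : ℤ))
                * (Dh (F (n - m) ((g : ℤ) - 2 - (h : ℤ)))
                    - (nbar (n - m) : TS R) * cc (δ A) * F (n - m) ((g : ℤ) - 1 - (h : ℤ))))
    (ε : ℕ × ℕ → ℤ)
    (hεpm : ∀ m : ℕ × ℕ, ε m = 1 ∨ ε m = -1)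
    (hεadd : ∀ m m' : ℕ × ℕ, ε (m + m') = ε m * ε m')
    (hε11 : ε (1, 1) = 1)
    (hamb : ∀ n : ℕ × ℕ, n ≠ 0 → ∀ g : ℕ,
      (F n (g : ℤ)).map (Polynomial.evalRingHom (0 : R))
        = (ε n * (-1) ^ (g + 1)) • (F (n.2, n.1) (g : ℤ)).map (Polynomial.evalRingHom (0 : R))) :
    ∀ r : ℕ, 1 ≤ r → ∀ g : ℕ, Even g → F (r, r) (g : ℤ) = 0 := by
  classical
  -- basic facts about ε
  have epsne : ∀ m : ℕ × ℕ, ε m ≠ 0 := by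
    intro m; rcases hεpm m with h | h <;> rw [h] <;> norm_num
  have epsd : ∀ m : ℕ × ℕ, ε m * ε m = 1 := by
    intro m; rcases hεpm m with h | h <;> rw [h] <;> norm_num
  have eps_diag : ∀ t : ℕ, ε (t, t) = 1 := by
    intro t
    induction t with
    | zero =>
      have h := hεadd 0 0
      rw [add_zero] at h
      rcases hεpm 0 with h0 | h0
      · exact h0
      · rw [h0] at h; norm_num at h
    | succ t ih =>
      have h := hεadd (t, t) (1, 1)
      rw [show ((t,t) + (1,1) : ℕ × ℕ) = (t+1, t+1) from rfl] at h
      rw [h, ih, hε11, one_mul]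
  have eps_swap : ∀ m : ℕ × ℕ, ε (m.2, m.1) = ε m := by
    intro m
    have h := hεadd m (m.2, m.1)
    rw [show (m + (m.2, m.1) : ℕ × ℕ) = (m.1 + m.2, m.1 + m.2) from by
      simp [Prod.ext_iff]; omega] at h
    rw [eps_diag] at h
    exact mul_left_cancel₀ (epsne m) (h.symm.trans (epsd m).symm)
  -- the master symmetry
  have master : ∀ g : ℕ, ∀ n : ℕ × ℕ, n ≠ 0 →
      F n (g : ℤ) = (ε n * sgn (g : ℤ)) • F (n.2, n.1) (g : ℤ) := by
    intro g
    induction g using Nat.strong_induction_on with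
    | _ g IH =>
      intro n hn
      obtain ⟨n1, n2⟩ := n
      show F (n1, n2) (g : ℤ) = (ε (n1, n2) * sgn (g : ℤ)) • F (n2, n1) (g : ℤ)
      have hn0 : ((n1, n2) : ℕ × ℕ) ≠ 0 := hn
      have hswne : ∀ m : ℕ × ℕ, m ≠ 0 → ((m.2, m.1) : ℕ × ℕ) ≠ 0 := by
        intro m hm
        simp only [ne_eq, Prod.ext_iff, Prod.fst_zero, Prod.snd_zero] at hm ⊢
        tauto
      have hn'0 : ((n2, n1) : ℕ × ℕ) ≠ 0 := hswne (n1, n2) hn0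
      have key : ∀ m : ℕ × ℕ, m ≠ 0 → ∀ j : ℤ, j < (g : ℤ) →
          F m j = (ε m * sgn j) • F (m.2, m.1) j := by
        intro m hm j hj
        rcases lt_or_ge j 0 with hneg | hpos
        · rw [hFneg m j hneg, hFneg (m.2, m.1) j hneg, smul_zero]
        · obtain ⟨k, rfl⟩ := Int.eq_ofNat_of_zero_le hpos
          exact IH k (by exact_mod_cast hj) m hm
      have key2 : ∀ m : ℕ × ℕ, m ≠ 0 → ∀ j : ℤ, j < (g : ℤ) →
          F (m.2, m.1) j = (ε m * sgn j) • F m j := by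
        intro m hm j hj
        have h : F (m.2, m.1) j = (ε (m.2, m.1) * sgn j) • F m j :=
          key (m.2, m.1) (hswne m hm) j hj
        rw [eps_swap m] at h
        exact h
      set s : ℤ := ε (n1, n2) * sgn (g : ℤ) with hs
      have factor : ∀ μ : ℕ × ℕ, μ ≠ 0 → ∀ j j' : ℤ, j' = j + 1 → j' < (g : ℤ) →
          Dh (F (μ.2, μ.1) j) - (nbar (μ.2, μ.1) : TS R) * cc (δ A) * F (μ.2, μ.1) j'
            = (ε μ * sgn j) • (Dh (F μ j) - (nbar μ : TS R) * cc (δ A) * F μ j') := by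
        intro μ hμ j j' hjj hj'
        subst hjj
        rw [key2 μ hμ j (by omega), key2 μ hμ (j + 1) hj', D_zsmul, nbar_swap μ, sgn_succ]
        simp only [zsmul_eq_mul]
        push_cast
        ring
      have E1 := heq (n1, n2) hn0 g
      have E2 := heq (n2, n1) hn'0 g
      suffices hx : F (n1, n2) (g : ℤ) - s • F (n2, n1) (g : ℤ) = 0 by
        exact sub_eq_zero.mp hx
      refine vanish (δ A) Dp hA hDpC hDpS hDpT (nbar (n1, n2)) _ ?_ ?_
      · -- the differential equation for the difference
        have hsq : ((nbar (n2, n1) : ℤ) : TS R) ^ 2 = ((nbar (n1, n2) : ℤ) : TS R) ^ 2 := by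
          rw [show nbar (n2, n1) = -nbar (n1, n2) from nbar_swap (n1, n2)]
          push_cast
          ring
        have hgoal : Dp (F (n1, n2) (g : ℤ) - s • F (n2, n1) (g : ℤ))
            - (2:ℚ)⁻¹ • (((nbar (n1, n2) : TS R)) ^ 2 * cc (δ A) ^ 2
                * (F (n1, n2) (g : ℤ) - s • F (n2, n1) (g : ℤ)))
            = (Dp (F (n1, n2) (g : ℤ))
                - (2:ℚ)⁻¹ • (((nbar (n1, n2) : TS R)) ^ 2 * cc (δ A) ^ 2 * F (n1, n2) (g : ℤ)))
              - s • (Dp (F (n2, n1) (g : ℤ))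
                - (2:ℚ)⁻¹ • (((nbar (n2, n1) : TS R)) ^ 2 * cc (δ A) ^ 2 * F (n2, n1) (g : ℤ))) := by
          rw [map_sub, D_zsmul, hsq, smul_sub]
          simp only [zsmul_eq_mul, qsmul_TS]
          ring
        rw [hgoal, E1, E2, sub_eq_zero]
        conv_rhs => rw [smul_add, smul_neg, Finset.smul_sum, smul_comm s ((2:ℚ)⁻¹),
          Finset.smul_sum]
        congr 1
        · -- linear terms
          rw [neg_inj]
          refine Finset.sum_congr rfl ?_
          intro h hh
          rw [Finset.mem_Icc] at hh
          have hidx : ((g : ℤ) - (h : ℤ)) < (g : ℤ) := by omega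
          have keyn : F (n2, n1) ((g : ℤ) - (h : ℤ))
              = (ε (n1, n2) * sgn ((g : ℤ) - (h : ℤ))) • F (n1, n2) ((g : ℤ) - (h : ℤ)) :=
            key2 (n1, n2) hn0 _ hidx
          have hnb' : nbar (n2, n1) = -nbar (n1, n2) := nbar_swap (n1, n2)
          rw [keyn, hnb', Dop2_zsmul, Dop2_neg, smul_smul, smul_smul]
          have hsc : s * (ε (n1, n2) * sgn ((g : ℤ) - (h : ℤ)))
              * (if h % 2 = 1 then (-1 : ℤ) else 1) = 1 := by
            rw [hs]
            have hre : ε (n1, n2) * sgn (g : ℤ) * (ε (n1, n2) * sgn ((g : ℤ) - (h : ℤ)))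
                * (if h % 2 = 1 then (-1 : ℤ) else 1)
                = (ε (n1, n2) * ε (n1, n2))
                  * (sgn (g : ℤ) * sgn ((g : ℤ) - (h : ℤ))
                    * (if h % 2 = 1 then (-1 : ℤ) else 1)) := by ring
            rw [hre, epsd (n1, n2), one_mul]
            simp only [sgn_mod]
            split_ifs <;> omega
          rw [hsc, one_smul]
        · -- quadratic terms
          congr 1
          refine Finset.sum_nbij' (fun a => (a.2, a.1)) (fun a => (a.2, a.1)) ?_ ?_ ?_ ?_ ?_
          · intro a ha
            simp only [Finset.mem_filter, Finset.mem_product, Finset.mem_range, ne_eq,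
              Prod.ext_iff, Prod.fst_zero, Prod.snd_zero] at ha ⊢
            obtain ⟨⟨hm1, hm2⟩, hm3, hm4⟩ := ha
            refine ⟨⟨hm2, hm1⟩, ?_, ?_⟩ <;> tauto
          · intro a ha
            simp only [Finset.mem_filter, Finset.mem_product, Finset.mem_range, ne_eq,
              Prod.ext_iff, Prod.fst_zero, Prod.snd_zero] at ha ⊢
            obtain ⟨⟨hm1, hm2⟩, hm3, hm4⟩ := ha
            refine ⟨⟨hm2, hm1⟩, ?_, ?_⟩ <;> tauto
          · intro a _; simp
          · intro a _; simp
          · intro a ha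
            simp only [Finset.mem_filter, Finset.mem_product, Finset.mem_range, ne_eq,
              Prod.ext_iff, Prod.fst_zero, Prod.snd_zero] at ha
            obtain ⟨⟨hm1, hm2⟩, hm3, hm4⟩ := ha
            obtain ⟨a1, a2⟩ := a
            simp only at hm1 hm2 hm3 hm4
            rw [Finset.smul_sum]
            refine Finset.sum_congr rfl ?_
            intro h hh
            rw [Finset.mem_range] at hh
            have ha0 : ((a1, a2) : ℕ × ℕ) ≠ 0 := by
              simp only [ne_eq, Prod.ext_iff, Prod.fst_zero, Prod.snd_zero]
              tauto
            have hb0 : ((n1 - a1, n2 - a2) : ℕ × ℕ) ≠ 0 := by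
              simp only [ne_eq, Prod.ext_iff, Prod.fst_zero, Prod.snd_zero]
              omega
            rw [show ((n1, n2) : ℕ × ℕ) - (a1, a2) = (n1 - a1, n2 - a2) from rfl,
              show ((n2, n1) : ℕ × ℕ) - (a2, a1) = (n2 - a2, n1 - a1) from rfl]
            have f1 : Dh (F (a2, a1) ((h : ℤ) - 1))
                  - (nbar (a2, a1) : TS R) * cc (δ A) * F (a2, a1) (h : ℤ)
                = (ε (a1, a2) * sgn ((h : ℤ) - 1))
                  • (Dh (F (a1, a2) ((h : ℤ) - 1))
                    - (nbar (a1, a2) : TS R) * cc (δ A) * F (a1, a2) (h : ℤ)) :=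
              factor (a1, a2) ha0 _ _ (by ring) (by omega)
            have f2 : Dh (F (n2 - a2, n1 - a1) ((g : ℤ) - 2 - (h : ℤ)))
                  - (nbar (n2 - a2, n1 - a1) : TS R) * cc (δ A)
                    * F (n2 - a2, n1 - a1) ((g : ℤ) - 1 - (h : ℤ))
                = (ε (n1 - a1, n2 - a2) * sgn ((g : ℤ) - 2 - (h : ℤ)))
                  • (Dh (F (n1 - a1, n2 - a2) ((g : ℤ) - 2 - (h : ℤ)))
                    - (nbar (n1 - a1, n2 - a2) : TS R) * cc (δ A)
                      * F (n1 - a1, n2 - a2) ((g : ℤ) - 1 - (h : ℤ))) :=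
              factor (n1 - a1, n2 - a2) hb0 _ _ (by ring) (by omega)
            rw [f1, f2, smul_mul_smul_comm, smul_smul]
            have hadd : ε (a1, a2) * ε (n1 - a1, n2 - a2) = ε (n1, n2) := by
              rw [← hεadd]
              congr 1
              simp only [Prod.mk_add_mk, Prod.ext_iff]
              omega
            have hsc2 : s * (ε (a1, a2) * sgn ((h : ℤ) - 1)
                * (ε (n1 - a1, n2 - a2) * sgn ((g : ℤ) - 2 - (h : ℤ)))) = 1 := by
              rw [hs]
              have hre : ε (n1, n2) * sgn (g : ℤ) * (ε (a1, a2) * sgn ((h : ℤ) - 1)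
                  * (ε (n1 - a1, n2 - a2) * sgn ((g : ℤ) - 2 - (h : ℤ))))
                  = (ε (n1, n2) * (ε (a1, a2) * ε (n1 - a1, n2 - a2)))
                    * (sgn (g : ℤ) * sgn ((h : ℤ) - 1) * sgn ((g : ℤ) - 2 - (h : ℤ))) := by
                ring
              rw [hre, hadd, epsd (n1, n2), one_mul]
              simp only [sgn_mod]
              split_ifs <;> omega
            rw [hsc2, one_smul]
      · -- holomorphic ambiguity part
        have hm : (F (n1, n2) (g : ℤ)).map (Polynomial.evalRingHom (0 : R))
            = (ε (n1, n2) * (-1) ^ (g + 1))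
              • (F (n2, n1) (g : ℤ)).map (Polynomial.evalRingHom (0 : R)) :=
          hamb (n1, n2) hn0 g
        rw [sgn_natCast] at hm
        have hmap : ((s • F (n2, n1) (g : ℤ)).map (Polynomial.evalRingHom (0 : R)))
            = s • ((F (n2, n1) (g : ℤ)).map (Polynomial.evalRingHom (0 : R))) := by
          rw [zsmul_eq_mul, Polynomial.map_mul, Polynomial.map_intCast, zsmul_eq_mul]
        rw [Polynomial.map_sub, hm, hmap, hs, sub_self]
  -- conclusion
  intro r hr g hg
  have h := master g (r, r) (by simp [Prod.ext_iff]; omega)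
  rw [eps_diag r, one_mul, sgn_even (by exact_mod_cast hg)] at h
  have h2 : (2 : ℚ) • F (r, r) (g : ℤ) = 0 := by
    rw [two_smul]
    nth_rewrite 1 [h]
    simp
  have : NoZeroSMulDivisors ℚ (TS R) :=
    by infer_instance
  rcases smul_eq_zero.mp h2 with h3 | h3
  · norm_num at h3
  · exact h3

end
end

section
/- Fix κ ≥ 1 and a nonzero n ∈ ℕ^κ. The set of A-matrices of all non-trivial vector partitions of n equals the Minkowski-sum union over all decompositions of n: { A(r) : r ∈ P(n), r not the trivial partition of n } = ⋃_{m + m' = n, m ≠ 0, m' ≠ 0} { X + Y : X ∈ { A(r₁) : r₁ ∈ P(m) }, Y ∈ { A(r₂) : r₂ ∈ P(m') } }, as sets of symmetric κ×κ matrices over ℕ. -/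
/-- A vector partition of a nonzero `n ∈ ℕ^κ`: a finitely supported function
`r : ℕ^κ → ℕ` with `r 0 = 0` and `Σ_m r(m)·m = n` (componentwise). -/
def IsVPartition {κ : ℕ} (n : Fin κ → ℕ) (r : (Fin κ → ℕ) →₀ ℕ) : Prop :=
  r 0 = 0 ∧ r.sum (fun m k => k • m) = n

/-- The `A`-matrix of a vector partition: `A(r)_{αβ} = Σ_m r(m)·m_α·m_β`. -/
def AMat {κ : ℕ} (r : (Fin κ → ℕ) →₀ ℕ) : Matrix (Fin κ) (Fin κ) ℕ :=
  Matrix.of fun α β => r.sum fun m k => k * (m α * m β)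

private lemma AMat_add {κ : ℕ} (r₁ r₂ : (Fin κ → ℕ) →₀ ℕ) :
    AMat (r₁ + r₂) = AMat r₁ + AMat r₂ := by
  ext α β
  simp only [AMat, Matrix.of_apply, Matrix.add_apply]
  exact Finsupp.sum_add_index' (fun m => zero_mul _) (fun m k l => add_mul k l _)

private lemma sum_smul_add {κ : ℕ} (r₁ r₂ : (Fin κ → ℕ) →₀ ℕ) :
    (r₁ + r₂).sum (fun m k => k • m) =
      r₁.sum (fun m k => k • m) + r₂.sum (fun m k => k • m) :=
  Finsupp.sum_add_index' (fun m => zero_smul ℕ m) (fun m k l => add_smul k l m)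

private lemma sum_smul_zero {κ : ℕ} (r : (Fin κ → ℕ) →₀ ℕ) (h0 : r 0 = 0)
    (h : r.sum (fun m k => k • m) = 0) : r = 0 := by
  ext m
  by_contra hm
  have hmem : m ∈ r.support := Finsupp.mem_support_iff.mpr hm
  have hmne : m ≠ 0 := by rintro rfl; exact hm h0
  obtain ⟨α, hα⟩ : ∃ α, m α ≠ 0 := by
    by_contra h'; push_neg at h'; exact hmne (funext h')
  have h2 := congrFun h α
  rw [Finsupp.sum, Finset.sum_apply] at h2
  have h3 := (Finset.sum_eq_zero_iff).mp h2 m hmem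
  simp only [Pi.smul_apply, smul_eq_mul, Nat.mul_eq_zero] at h3
  rcases h3 with h1 | h2'
  · exact hm h1
  · exact hα h2'

/-- Set recursion for the exponents of the propagator-exponentials: the set of
`A`-matrices of non-trivial vector partitions of `n` is the union, over all
decompositions `n = m + m'` into nonzero parts, of the Minkowski sums of the sets of
`A`-matrices of vector partitions of `m` and of `m'`. -/
theorem vpartition_AMat_set_recursion {κ : ℕ} (hκ : 1 ≤ κ) (n : Fin κ → ℕ) (hn : n ≠ 0) :
    {M : Matrix (Fin κ) (Fin κ) ℕ |
        ∃ r, IsVPartition n r ∧ r ≠ Finsupp.single n 1 ∧ M = AMat r}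
      = ⋃ (m : Fin κ → ℕ) (m' : Fin κ → ℕ) (_ : m + m' = n) (_ : m ≠ 0) (_ : m' ≠ 0),
          {M : Matrix (Fin κ) (Fin κ) ℕ |
            ∃ X ∈ {X | ∃ r₁, IsVPartition m r₁ ∧ X = AMat r₁},
            ∃ Y ∈ {Y | ∃ r₂, IsVPartition m' r₂ ∧ Y = AMat r₂}, M = X + Y} := by
  ext M
  simp only [Set.mem_setOf_eq, Set.mem_iUnion]
  constructor
  · rintro ⟨r, ⟨hr0, hrsum⟩, hrne, rfl⟩
    have hrne0 : r ≠ 0 := by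
      rintro rfl
      exact hn (by simpa using hrsum.symm)
    obtain ⟨m, hm⟩ := Finsupp.support_nonempty_iff.mpr hrne0
    have hmpos : r m ≠ 0 := Finsupp.mem_support_iff.mp hm
    have hmne : m ≠ 0 := by rintro rfl; exact hmpos hr0
    set r₂ := r - Finsupp.single m 1 with hr₂def
    have hle : Finsupp.single m 1 ≤ r :=
      Finsupp.single_le_iff.mpr (Nat.one_le_iff_ne_zero.mpr hmpos)
    have hsplit : Finsupp.single m 1 + r₂ = r := add_tsub_cancel_of_le hle
    have hr₂0 : r₂ 0 = 0 := by
      rw [hr₂def, Finsupp.tsub_apply, hr0]; omega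
    have hsingle_sum : (Finsupp.single m 1).sum (fun m k => k • m) = m := by
      rw [Finsupp.sum_single_index (zero_smul ℕ m), one_smul]
    set m' := r₂.sum (fun m k => k • m) with hm'def
    have hsum : m + m' = n := by
      rw [← hrsum, ← hsplit, sum_smul_add, hsingle_sum]
    have hm'ne : m' ≠ 0 := by
      intro h
      have hr₂z : r₂ = 0 := sum_smul_zero r₂ hr₂0 h
      apply hrne
      have : m = n := by rw [← hsum, h, add_zero]
      rw [← hsplit, hr₂z, add_zero, this]
    refine ⟨m, m', hsum, hmne, hm'ne, AMat (Finsupp.single m 1),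
      ⟨Finsupp.single m 1, ⟨⟨Finsupp.single_eq_of_ne' hmne, hsingle_sum⟩, rfl⟩⟩,
      AMat r₂, ⟨r₂, ⟨⟨hr₂0, rfl⟩, rfl⟩⟩, ?_⟩
    rw [← AMat_add, hsplit]
  · rintro ⟨m, m', hsum, hm, hm', X, ⟨r₁, ⟨h10, h1s⟩, rfl⟩, Y, ⟨r₂, ⟨h20, h2s⟩, rfl⟩, rfl⟩
    refine ⟨r₁ + r₂, ⟨?_, ?_⟩, ?_, (AMat_add r₁ r₂).symm⟩
    · simp [Finsupp.add_apply, h10, h20]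
    · rw [sum_smul_add, h1s, h2s, hsum]
    · intro heq
      have hr₁ne : r₁ ≠ 0 := by
        rintro rfl; exact hm (by simpa using h1s.symm)
      have hr₂ne : r₂ ≠ 0 := by
        rintro rfl; exact hm' (by simpa using h2s.symm)
      obtain ⟨x, hx⟩ := Finsupp.support_nonempty_iff.mpr hr₁ne
      obtain ⟨y, hy⟩ := Finsupp.support_nonempty_iff.mpr hr₂ne
      have hx' : r₁ x ≠ 0 := Finsupp.mem_support_iff.mp hx
      have hy' : r₂ y ≠ 0 := Finsupp.mem_support_iff.mp hy
      have hxn : x = n := by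
        by_contra h
        have := congrFun (congrArg (fun f => f.toFun) heq) x
        have : r₁ x + r₂ x = (Finsupp.single n 1) x := by rw [← heq]; rfl
        rw [Finsupp.single_eq_of_ne' (Ne.symm h)] at this
        omega
      have hyn : y = n := by
        by_contra h
        have : r₁ y + r₂ y = (Finsupp.single n 1) y := by rw [← heq]; rfl
        rw [Finsupp.single_eq_of_ne' (Ne.symm h)] at this
        omega
      have : r₁ n + r₂ n = (Finsupp.single n 1) n := by rw [← heq]; rfl
      rw [Finsupp.single_eq_same] at this
      subst hxn; subst hyn
      omega
end

section
/- Fix κ ≥ 1 and a nonzero n ∈ ℕ^κ. If r is a vector partition of n whose A-matrix equals n⊗n, that is Σ_m r(m)·m_α·m_β = n_α·n_β for all 1 ≤ α, β ≤ κ, then r is the trivial partition of n (r(n) = 1 and r(m) = 0 for all m ≠ n). -/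
/-- If a vector partition of `n` has `A`-matrix `n⊗n`, i.e.
`Σ_m r(m)·m_α·m_β = n_α·n_β` for all `α, β`, then it is the trivial partition of `n`. -/
theorem vpartition_trivial_class {κ : ℕ} (hκ : 1 ≤ κ) (n : Fin κ → ℕ) (hn : n ≠ 0)
    (r : (Fin κ → ℕ) →₀ ℕ) (hr : IsVPartition n r)
    (hA : ∀ α β : Fin κ, r.sum (fun m k => k * (m α * m β)) = n α * n β) :
    r = Finsupp.single n 1 := by
  obtain ⟨hr0, hrsum⟩ := hr
  -- componentwise sum identity
  have h1 : ∀ β : Fin κ, ∑ m ∈ r.support, r m * m β = n β := by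
    intro β
    have := congrFun hrsum β
    rw [Finsupp.sum, Finset.sum_apply] at this
    simpa using this
  have hA' : ∀ α β : Fin κ, ∑ m ∈ r.support, r m * (m α * m β) = n α * n β := by
    intro α β; exact hA α β
  -- each part is ≤ n componentwise (after multiplying by its multiplicity)
  have hle : ∀ m ∈ r.support, ∀ β, r m * m β ≤ n β := by
    intro m hm β
    rw [← h1 β]
    exact Finset.single_le_sum (f := fun m' => r m' * m' β) (fun i _ => Nat.zero_le _) hm
  have hrpos : ∀ m ∈ r.support, 1 ≤ r m := by
    intro m hm
    exact Nat.one_le_iff_ne_zero.mpr (Finsupp.mem_support_iff.mp hm)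
  have hmle : ∀ m ∈ r.support, ∀ β, m β ≤ n β := by
    intro m hm β
    calc m β = 1 * m β := (one_mul _).symm
    _ ≤ r m * m β := Nat.mul_le_mul_right _ (hrpos m hm)
    _ ≤ n β := hle m hm β
  -- key step: if a part has a nonzero coordinate, it equals n
  have key : ∀ m ∈ r.support, ∀ α β : Fin κ, m α ≠ 0 → m β = n β := by
    intro m hm α β hα
    have hterm : ∀ m' ∈ r.support,
        r m' * (m' α * m' β) ≤ r m' * (m' α * n β) := by
      intro m' hm'
      exact Nat.mul_le_mul_left _ (Nat.mul_le_mul_left _ (hmle m' hm' β))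
    have hsum2 : ∑ m' ∈ r.support, r m' * (m' α * n β) = n α * n β := by
      have : ∑ m' ∈ r.support, r m' * (m' α * n β)
          = (∑ m' ∈ r.support, r m' * m' α) * n β := by
        rw [Finset.sum_mul]
        exact Finset.sum_congr rfl (fun m' _ => by ring)
      rw [this, h1 α]
    have heq : ∑ m' ∈ r.support, r m' * (m' α * m' β)
        = ∑ m' ∈ r.support, r m' * (m' α * n β) := by
      rw [hA' α β, hsum2]
    have := (Finset.sum_eq_sum_iff_of_le hterm).mp heq m hm
    have hrm : r m ≠ 0 := Finsupp.mem_support_iff.mp hm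
    have h2 : m α * m β = m α * n β := Nat.eq_of_mul_eq_mul_left
      (Nat.pos_of_ne_zero hrm) this
    exact Nat.eq_of_mul_eq_mul_left (Nat.pos_of_ne_zero hα) h2
  -- every part equals n
  have hall : ∀ m ∈ r.support, m = n := by
    intro m hm
    have hm0 : m ≠ 0 := by
      intro h; apply Finsupp.mem_support_iff.mp hm; rw [h]; exact hr0
    obtain ⟨α, hα⟩ := Function.ne_iff.mp hm0
    funext β
    exact key m hm α β hα
  -- support is nonempty
  have hne : r.support.Nonempty := by
    by_contra h
    rw [Finset.not_nonempty_iff_eq_empty] at h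
    apply hn
    rw [← hrsum, Finsupp.sum, h, Finset.sum_empty]
  have hnsupp : n ∈ r.support := by
    obtain ⟨m, hm⟩ := hne
    rwa [hall m hm] at hm
  have hsupp : r.support = {n} := by
    apply Finset.eq_singleton_iff_unique_mem.mpr
    exact ⟨hnsupp, fun m hm => hall m hm⟩
  -- r n = 1
  obtain ⟨α₀, hα₀⟩ := Function.ne_iff.mp hn
  have hrn : r n = 1 := by
    have := h1 α₀
    rw [hsupp, Finset.sum_singleton] at this
    have hn0 : n α₀ ≠ 0 := hα₀
    nlinarith [Nat.pos_of_ne_zero hn0]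
  ext m
  by_cases hm : m = n
  · subst hm; rw [hrn, Finsupp.single_eq_same]
  · rw [Finsupp.single_eq_of_ne' (Ne.symm hm)]
    by_contra h
    have : m ∈ r.support := Finsupp.mem_support_iff.mpr h
    exact hm (hall m this)
end

section
/- Let c, A be nonzero complex numbers, b an integer, and E, K nonnegative reals. Let (F_g), (F'_g), (e_g) be sequences of complex numbers such that for all sufficiently large g: F_g = c·A^{b−2g}·(2g−b−1)!·(1 + e_g), |e_g| ≤ E/g, and |F'_g| ≤ K·(2g−b−1)!·|A|^{b−2g}. Then the sequence g ↦ F'_g · ( (2g−b+1)! / ((2g−b−1)!·F_{g+1}) − (2g−b−1)!·F_{g−1} / ((2g−b−3)!·F_g²) ) tends to 0 as g → ∞. -/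
open Filter


private lemma instanton_aux_key (c w u p q r f0 f2 f4 : ℂ) (hc : c ≠ 0) (hw : w ≠ 0)
    (hp : p ≠ 0) (hq : q ≠ 0) (h0 : f0 ≠ 0) (h2 : f2 ≠ 0) (h4 : f4 ≠ 0) :
    f4 / (f2 * (c * (w * u⁻¹) * f4 * p)) - f2 * (c * (w * u) * f0 * r) / (f0 * (c * w * f2 * q)^2)
      = u * w⁻¹ / (c * f2) * (p⁻¹ - r * (q^2)⁻¹) := by
  have hq2 : q ^ 2 ≠ 0 := pow_ne_zero _ hq
  have hd1 : f2 * (c * w * f4 * p) ≠ 0 := by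
    simp [mul_ne_zero_iff, *]
  have hd2 : f0 * (c * w * f2 * q) ^ 2 ≠ 0 := by
    simp [mul_ne_zero_iff, pow_ne_zero_iff, *]
  have hd3 : w * (c * f2) ≠ 0 := by simp [mul_ne_zero_iff, *]
  have hd4 : p * q ^ 2 ≠ 0 := mul_ne_zero hp hq2
  have hB : f2 * (c * (w * u⁻¹) * f4 * p) = f2 * (c * w * f4 * p) / u := by
    rw [div_eq_mul_inv]; ring
  have hX : u * w⁻¹ / (c * f2) = u / (w * (c * f2)) := by
    rw [div_eq_mul_inv, div_eq_mul_inv, mul_inv]; ring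
  have hY : p⁻¹ - r * (q ^ 2)⁻¹ = (q ^ 2 - r * p) / (p * q ^ 2) := by
    rw [inv_eq_one_div, ← div_eq_mul_inv, div_sub_div _ _ hp hq2, one_mul]
    ring
  rw [hB, div_div_eq_mul_div, hX, hY]
  rw [div_mul_div_comm, div_sub_div _ _ hd1 hd2,
    div_eq_div_iff (mul_ne_zero hd1 hd2) (mul_ne_zero hd3 hd4)]
  ring

private lemma instanton_aux_bound (K a2 f a cc : ℝ) (ha : a ≠ 0) (hf : f ≠ 0) (hcc : cc ≠ 0) :
    (K * f * a) * (a2 * a⁻¹ / (cc * f)) = K * a2 / cc := by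
  calc (K * f * a) * (a2 * a⁻¹ / (cc * f))
      = K * a2 / cc * ((a * a⁻¹) * (f * f⁻¹)) := by
        rw [div_eq_mul_inv, div_eq_mul_inv, mul_inv]; ring
    _ = K * a2 / cc := by
        rw [mul_inv_cancel₀ ha, mul_inv_cancel₀ hf, one_mul, mul_one]

/-- Analytic core of the proof that the instanton action is holomorphic: if the
perturbative free energies `F_g` behave like `c·A^{b−2g}·(2g−b−1)!·(1+e_g)` with
`|e_g| ≤ E/g`, and the propagator derivatives `F'_g` satisfy
`|F'_g| ≤ K·(2g−b−1)!·|A|^{b−2g}`, then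
`F'_g·( (2g−b+1)!/((2g−b−1)!·F_{g+1}) − (2g−b−1)!·F_{g−1}/((2g−b−3)!·F_g²) ) → 0`. -/
theorem instanton_action_holomorphic_large_order
    (c A : ℂ) (hc : c ≠ 0) (hA : A ≠ 0) (b : ℤ) (E K : ℝ) (hE : 0 ≤ E) (hK : 0 ≤ K)
    (F F' e : ℕ → ℂ)
    (hF : ∀ᶠ g : ℕ in atTop,
      F g = c * A ^ (b - 2 * (g : ℤ)) *
        (Nat.factorial (2 * (g : ℤ) - b - 1).toNat : ℂ) * (1 + e g))
    (he : ∀ᶠ g : ℕ in atTop, ‖e g‖ ≤ E / (g : ℝ))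
    (hF' : ∀ᶠ g : ℕ in atTop,
      ‖F' g‖ ≤ K * (Nat.factorial (2 * (g : ℤ) - b - 1).toNat : ℝ) *
        ‖A‖ ^ (b - 2 * (g : ℤ))) :
    Tendsto
      (fun g : ℕ => F' g *
        ((Nat.factorial (2 * (g : ℤ) - b + 1).toNat : ℂ) /
            ((Nat.factorial (2 * (g : ℤ) - b - 1).toNat : ℂ) * F (g + 1))
          - (Nat.factorial (2 * (g : ℤ) - b - 1).toNat : ℂ) * F (g - 1) /
            ((Nat.factorial (2 * (g : ℤ) - b - 3).toNat : ℂ) * (F g) ^ 2)))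
      atTop (nhds 0) := by
  -- the error sequence tends to 0
  have he0 : Tendsto e atTop (nhds 0) := by
    refine squeeze_zero_norm' he ?_
    exact tendsto_const_div_atTop_nhds_zero_nat E
  have he1 : Tendsto (fun g : ℕ => e (g + 1)) atTop (nhds 0) :=
    he0.comp (tendsto_add_atTop_nat 1)
  have hes : Tendsto (fun g : ℕ => e (g - 1)) atTop (nhds 0) :=
    he0.comp (tendsto_sub_atTop_nat 1)
  -- the normalized difference δ tends to 0
  have hδ0 : Tendsto
      (fun g : ℕ => (1 + e (g + 1))⁻¹ - (1 + e (g - 1)) * ((1 + e g) ^ 2)⁻¹)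
      atTop (nhds 0) := by
    have h1 : Tendsto (fun g : ℕ => (1 + e (g + 1))⁻¹) atTop (nhds 1) := by
      have h := (tendsto_const_nhds (x := (1 : ℂ)) (f := atTop)).add he1
      simpa using h.inv₀ (by norm_num)
    have h2 : Tendsto (fun g : ℕ => (1 + e (g - 1)) * ((1 + e g) ^ 2)⁻¹)
        atTop (nhds 1) := by
      have ha := (tendsto_const_nhds (x := (1 : ℂ)) (f := atTop)).add hes
      have hb := ((tendsto_const_nhds (x := (1 : ℂ)) (f := atTop)).add he0).pow 2
      have := ha.mul (hb.inv₀ (by norm_num))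
      simpa using this
    simpa using h1.sub h2
  -- eventual non-vanishing of 1 + e g
  have hne : ∀ᶠ g : ℕ in atTop, 1 + e g ≠ 0 := by
    have hn : Tendsto (fun g : ℕ => ‖e g‖) atTop (nhds 0) := by simpa using he0.norm
    have h := hn.eventually_lt_const (show (0 : ℝ) < 1 by norm_num)
    filter_upwards [h] with g hg h0
    have : e g = -1 := by linear_combination h0
    rw [this] at hg
    simp at hg
  obtain ⟨N1, hF⟩ := eventually_atTop.1 hF
  obtain ⟨N3, hF'⟩ := eventually_atTop.1 hF'
  obtain ⟨N4, hne⟩ := eventually_atTop.1 hne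
  refine squeeze_zero_norm' ?_
    (a := fun g : ℕ => K * ‖A‖ ^ (2 : ℤ) / ‖c‖ *
      ‖(1 + e (g + 1))⁻¹ - (1 + e (g - 1)) * ((1 + e g) ^ 2)⁻¹‖)
    (by simpa using (tendsto_const_nhds (x := K * ‖A‖ ^ (2 : ℤ) / ‖c‖)
      (f := atTop)).mul hδ0.norm)
  refine eventually_atTop.2 ⟨N1 + N3 + N4 + (b + 3).toNat + 2, fun g hg => ?_⟩
  obtain ⟨k, rfl⟩ : ∃ k, g = k + 1 := ⟨g - 1, by omega⟩
  have hkb : (b : ℤ) + 3 ≤ 2 * ((k : ℤ) + 1) := by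
    have := Int.self_le_toNat (b + 3)
    omega
  set m := (2 * (k : ℤ) - b - 1).toNat with hmdef
  have hm : (m : ℤ) = 2 * (k : ℤ) - b - 1 := by omega
  -- instantiate the hypotheses
  have hFg := hF (k + 1) (by omega)
  have hFg1 := hF (k + 1 + 1) (by omega)
  have hFgm := hF k (by omega)
  have hF'g := hF' (k + 1) (by omega)
  have hnek : 1 + e k ≠ 0 := hne k (by omega)
  have hnek1 : 1 + e (k + 1) ≠ 0 := hne (k + 1) (by omega)
  have hnek2 : 1 + e (k + 1 + 1) ≠ 0 := hne (k + 1 + 1) (by omega)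
  -- exponent and factorial-argument rewrites
  have e1 : b - 2 * ((k + 1 : ℕ) : ℤ) = b - 2 * (k : ℤ) - 2 := by push_cast; ring
  have e2 : b - 2 * ((k + 1 + 1 : ℕ) : ℤ) = b - 2 * (k : ℤ) - 2 + -2 := by
    push_cast; ring
  have e3 : b - 2 * ((k : ℕ) : ℤ) = b - 2 * (k : ℤ) - 2 + 2 := by ring
  have f1 : (2 * ((k + 1 : ℕ) : ℤ) - b - 1).toNat = m + 2 := by
    push_cast; omega
  have f2 : (2 * ((k + 1 + 1 : ℕ) : ℤ) - b - 1).toNat = m + 4 := by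
    push_cast; omega
  have f4 : (2 * ((k + 1 : ℕ) : ℤ) - b + 1).toNat = m + 4 := by
    push_cast; omega
  have f5 : (2 * ((k + 1 : ℕ) : ℤ) - b - 3).toNat = m := by
    push_cast; omega
  rw [e1, f1] at hFg
  rw [e2, f2, zpow_add₀ hA] at hFg1
  rw [e3, zpow_add₀ hA, ← hmdef] at hFgm
  rw [e1, f1] at hF'g
  have hA2 : A ^ (-2 : ℤ) = (A ^ (2 : ℤ))⁻¹ := by
    rw [show (-2 : ℤ) = -(2 : ℤ) by norm_num, zpow_neg]
  rw [hA2] at hFg1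
  generalize hW : A ^ (b - 2 * (k : ℤ) - 2) = w at hFg hFg1 hFgm
  generalize hU : A ^ (2 : ℤ) = u at hFg1 hFgm
  have hw : w ≠ 0 := hW ▸ zpow_ne_zero _ hA
  have hu : u ≠ 0 := hU ▸ zpow_ne_zero _ hA
  have hfm : ((m.factorial : ℂ)) ≠ 0 := Nat.cast_ne_zero.mpr m.factorial_ne_zero
  have hfm2 : (((m + 2).factorial : ℂ)) ≠ 0 :=
    Nat.cast_ne_zero.mpr (m + 2).factorial_ne_zero
  have hfm4 : (((m + 4).factorial : ℂ)) ≠ 0 :=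
    Nat.cast_ne_zero.mpr (m + 4).factorial_ne_zero
  -- the key algebraic identity
  have key : ((m + 4).factorial : ℂ) / (((m + 2).factorial : ℂ) * F (k + 1 + 1))
      - ((m + 2).factorial : ℂ) * F k / ((m.factorial : ℂ) * (F (k + 1)) ^ 2)
      = u * w⁻¹ / (c * ((m + 2).factorial : ℂ))
        * ((1 + e (k + 1 + 1))⁻¹ - (1 + e k) * ((1 + e (k + 1)) ^ 2)⁻¹) := by
    rw [hFg, hFg1, hFgm]
    generalize hp : 1 + e (k + 1 + 1) = p
    generalize hq : 1 + e (k + 1) = q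
    generalize hr : 1 + e k = r
    have hp' : p ≠ 0 := hp ▸ hnek2
    have hq' : q ≠ 0 := hq ▸ hnek1
    exact instanton_aux_key c w u p q r _ _ _ hc hw hp' hq' hfm hfm2 hfm4
  -- rewrite the goal
  simp only [Nat.add_sub_cancel, f1, f4, f5, key]
  rw [norm_mul]
  have hXnorm : ‖u * w⁻¹ / (c * ((m + 2).factorial : ℂ))‖
      = ‖A‖ ^ (2 : ℤ) * (‖A‖ ^ (b - 2 * (k : ℤ) - 2))⁻¹
        / (‖c‖ * ((m + 2).factorial : ℝ)) := by
    rw [← hW, ← hU]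
    simp [norm_mul, norm_div, norm_inv, norm_zpow]
  rw [norm_mul, hXnorm, ← mul_assoc]
  have hδnn : (0 : ℝ) ≤ ‖(1 + e (k + 1 + 1))⁻¹ - (1 + e k) * ((1 + e (k + 1)) ^ 2)⁻¹‖ :=
    norm_nonneg _
  refine mul_le_mul_of_nonneg_right ?_ hδnn
  have hAn : (0 : ℝ) < ‖A‖ := norm_pos_iff.mpr hA
  have hcn : (0 : ℝ) < ‖c‖ := norm_pos_iff.mpr hc
  have hwpos : (0 : ℝ) < ‖A‖ ^ (b - 2 * (k : ℤ) - 2) := zpow_pos hAn _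
  have hfpos : (0 : ℝ) < ((m + 2).factorial : ℝ) :=
    Nat.cast_pos.mpr (m + 2).factorial_pos
  calc ‖F' (k + 1)‖ * (‖A‖ ^ (2 : ℤ) * (‖A‖ ^ (b - 2 * (k : ℤ) - 2))⁻¹
        / (‖c‖ * ((m + 2).factorial : ℝ)))
      ≤ (K * ((m + 2).factorial : ℝ) * ‖A‖ ^ (b - 2 * (k : ℤ) - 2)) *
        (‖A‖ ^ (2 : ℤ) * (‖A‖ ^ (b - 2 * (k : ℤ) - 2))⁻¹
        / (‖c‖ * ((m + 2).factorial : ℝ))) := by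
        refine mul_le_mul_of_nonneg_right hF'g ?_
        positivity
    _ = K * ‖A‖ ^ (2 : ℤ) / ‖c‖ :=
        instanton_aux_bound K (‖A‖ ^ (2 : ℤ)) ((m + 2).factorial : ℝ)
          (‖A‖ ^ (b - 2 * (k : ℤ) - 2)) ‖c‖ (ne_of_gt hwpos) (ne_of_gt hfpos)
          (ne_of_gt hcn)
end
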